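/- Let λ ∈ Γ_k^+ with S_k(λ)/S_l(λ) = C(n,k)/C(n,l) for 0 ≤ l < k ≤ n. Then S_{k+1}(λ)/S_k(λ) ≤ (n−k)/(k+1) and S_{l−1}(λ)/S_l(λ) ≤ l/(n−l+1). -/

import Mathlib

open Polynomial Multiset

noncomputable def PP (s : Multiset ℝ) : ℝ[X] := (s.map fun a => X + C a).prod

lemma PP_monic (s : Multiset ℝ) : (PP s).Monic :=
  monic_multiset_prod_of_monic _ _ (fun a _ => monic_X_add_C a)

lemma PP_natDegree (s : Multiset ℝ) : (PP s).natDegree = Multiset.card s := by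
  rw [PP, natDegree_multiset_prod_of_monic]
  · rw [Multiset.map_map]
    simp [Function.comp_def, natDegree_X_add_C]
  · intro f hf
    obtain ⟨a, _, rfl⟩ := Multiset.mem_map.mp hf; exact monic_X_add_C a

lemma PP_card_roots (s : Multiset ℝ) : Multiset.card (PP s).roots = Multiset.card s := by
  rw [PP, roots_multiset_prod]
  · rw [Multiset.card_bind, Multiset.map_map]
    have : ∀ a : ℝ, (X + C a).roots = {-a} := by
      intro a
      rw [show (X + C a : ℝ[X]) = X - C (-a) by rw [map_neg, sub_neg_eq_add]]
      exact roots_X_sub_C (-a)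
    simp [Function.comp_def, this]
  · intro h
    obtain ⟨a, _, ha⟩ := Multiset.mem_map.mp h
    exact (monic_X_add_C a).ne_zero ha

lemma PP_coeff (s : Multiset ℝ) {j : ℕ} (hj : j ≤ Multiset.card s) :
    (PP s).coeff j = s.esymm (Multiset.card s - j) :=
  Multiset.prod_X_add_C_coeff s hj

lemma PP_splits (s : Multiset ℝ) : (PP s).Splits :=
  splits_iff_card_roots.mpr (by rw [PP_card_roots, PP_natDegree])

lemma splits_derivative (p : ℝ[X]) (hp : p.Splits) :
    (derivative p).Splits := by
  rcases eq_or_ne (p.natDegree) 0 with h0 | h0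
  · rw [eq_C_of_natDegree_eq_zero h0, derivative_C]; exact Splits.zero
  · rw [splits_iff_card_roots]
    have h1 : Multiset.card p.roots = p.natDegree := splits_iff_card_roots.mp hp
    have h2 := p.card_roots_le_derivative
    have h3 : (derivative p).natDegree ≤ p.natDegree - 1 :=
      Nat.le_sub_one_of_lt (natDegree_derivative_lt h0)
    have h4 := (derivative p).card_roots'
    omega

lemma splits_iterate_derivative (p : ℝ[X]) (hp : p.Splits) (k : ℕ) :
    (derivative^[k] p).Splits := by
  induction k with
  | zero => exact hp
  | succ k ih => rw [Function.iterate_succ_apply']; exact splits_derivative _ ih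

lemma discrim_step (h : ℝ[X]) (hs : h.Splits) (hd : h.natDegree ≤ 2) :
    4 * (h.coeff 2 * h.coeff 0) ≤ (h.coeff 1) ^ 2 := by
  rcases eq_or_ne (h.coeff 2) 0 with h2 | h2
  · simp [h2]; positivity
  · have hdeg : h.natDegree = 2 := le_antisymm hd (le_natDegree_of_ne_zero h2)
    have hne : h ≠ 0 := fun h0 => by simp [h0] at h2
    have hdeg' : h.degree ≠ 0 := by
      rw [degree_eq_natDegree hne, hdeg]; exact (by decide)
    obtain ⟨x, hx⟩ := hs.exists_eval_eq_zero hdeg'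
    have he : h.coeff 0 + h.coeff 1 * x + h.coeff 2 * x ^ 2 = 0 := by
      have := eval_eq_sum_range' (p := h) (n := 3) (by omega) x
      rw [hx] at this
      rw [Finset.sum_range_succ, Finset.sum_range_succ, Finset.sum_range_succ] at this
      simp at this
      linarith [this]
    have key : h.coeff 1 ^ 2 - 4 * (h.coeff 2 * h.coeff 0) =
        (2 * h.coeff 2 * x + h.coeff 1) ^ 2 -
          4 * h.coeff 2 * (h.coeff 0 + h.coeff 1 * x + h.coeff 2 * x ^ 2) := by ring
    rw [he, mul_zero, sub_zero] at key
    linarith [sq_nonneg (2 * h.coeff 2 * x + h.coeff 1)]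

lemma exists_deriv_multiset (s : Multiset ℝ) (hn : 1 ≤ Multiset.card s) :
    ∃ t : Multiset ℝ, Multiset.card t = Multiset.card s - 1 ∧
      ∀ j, j ≤ Multiset.card s - 1 →
        ((Multiset.card s : ℝ) - j) * s.esymm j = (Multiset.card s : ℝ) * t.esymm j := by
  set n := Multiset.card s with hns
  set q := derivative (PP s) with hq
  have hqtop : q.coeff (n - 1) = (n : ℝ) := by
    rw [hq, coeff_derivative, show n - 1 + 1 = n by omega,
      show (PP s).coeff n = 1 by
        have := (PP_monic s).coeff_natDegree
        rwa [PP_natDegree] at this]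
    rw [Nat.cast_sub hn]
    push_cast
    ring
  have hqne : q.coeff (n-1) ≠ 0 := by rw [hqtop]; positivity
  have hdeg : q.natDegree = n - 1 := by
    have h1 : q.natDegree ≤ n - 1 := by
      have := natDegree_derivative_lt (p := PP s) (by rw [PP_natDegree]; omega)
      rw [PP_natDegree] at this; rw [← hq] at this; omega
    exact le_antisymm h1 (le_natDegree_of_ne_zero hqne)
  have hroots : Multiset.card q.roots = q.natDegree := by
    have h2 := (PP s).card_roots_le_derivative
    rw [PP_card_roots] at h2
    rw [← hq] at h2
    have h4 := q.card_roots'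
    omega
  refine ⟨q.roots.map Neg.neg, by rw [Multiset.card_map]; omega, fun j hj => ?_⟩
  have hm1 : q.coeff (n - 1 - j) = ((n : ℝ) - j) * s.esymm j := by
    rw [hq, coeff_derivative, show n - 1 - j + 1 = n - j by omega,
      PP_coeff s (show n - j ≤ n by omega), show n - (n - j) = j by omega]
    have hc : ((n - 1 - j : ℕ) : ℝ) + 1 = (n : ℝ) - j := by
      rw [show n - 1 - j = n - (j + 1) by omega, Nat.cast_sub (by omega)]
      push_cast; ring
    rw [hc]; ring
  have hm2 : q.coeff (n - 1 - j) = (n : ℝ) * ((q.roots.map Neg.neg).esymm j) := by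
    have hlead : q.leadingCoeff = (n : ℝ) := by rw [leadingCoeff, hdeg]; exact hqtop
    rw [Polynomial.coeff_eq_esymm_roots_of_card hroots (by omega : n - 1 - j ≤ q.natDegree),
      hlead, hdeg, show n - 1 - (n - 1 - j) = j by omega]
    have : q.roots = (q.roots.map Neg.neg).map Neg.neg := by
      rw [Multiset.map_map]; simp
    conv_lhs => rw [this]
    rw [Multiset.esymm_neg]
    have h11 : ((-1 : ℝ)) ^ j * (-1) ^ j = 1 := by rw [← mul_pow]; simp
    linear_combination ((n : ℝ) * ((q.roots.map Neg.neg).esymm j)) * h11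
  rw [← hm1, hm2]

lemma reverse_PP_splits (s : Multiset ℝ) : (PP s).reverse.Splits := by
  induction s using Multiset.induction with
  | empty =>
      apply Splits.of_natDegree_le_one
      calc (PP 0).reverse.natDegree ≤ (PP 0).natDegree := reverse_natDegree_le _
        _ ≤ 1 := by rw [PP_natDegree]; simp
  | cons a s ih =>
      have hPP : PP (a ::ₘ s) = (X + C a) * PP s := by
        rw [PP, Multiset.map_cons, Multiset.prod_cons]; rfl
      rw [hPP, reverse_mul_of_domain]
      exact Splits.mul (Splits.of_natDegree_le_one
        ((reverse_natDegree_le _).trans (by rw [natDegree_X_add_C]))) ih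

lemma reverse_PP_coeff (s : Multiset ℝ) {j : ℕ} (hj : j ≤ Multiset.card s) :
    (PP s).reverse.coeff j = s.esymm j := by
  rw [coeff_reverse, PP_natDegree, revAt_le hj, PP_coeff s (Nat.sub_le _ _),
    Nat.sub_sub_self hj]

lemma newton_base (s : Multiset ℝ) (d : ℕ) (hc : Multiset.card s = d + 2) :
    2 * ((d : ℝ) + 2) * (s.esymm (d + 2) * s.esymm d) ≤
      ((d : ℝ) + 1) * (s.esymm (d + 1)) ^ 2 := by
  set g := (PP s).reverse with hg
  set h := derivative^[d] g with hh
  have hsp : h.Splits := splits_iterate_derivative g (reverse_PP_splits s) d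
  have hdeg : h.natDegree ≤ 2 := by
    have h1 : h.natDegree ≤ g.natDegree - d := natDegree_iterate_derivative g d
    have h2 : g.natDegree ≤ d + 2 := by
      rw [hg]
      exact (reverse_natDegree_le _).trans (by rw [PP_natDegree, hc])
    omega
  have hco : ∀ j : ℕ, j ≤ 2 → h.coeff j = ((j + d).descFactorial d : ℝ) * s.esymm (j + d) := by
    intro j hj
    rw [hh, coeff_iterate_derivative, reverse_PP_coeff s (by omega), nsmul_eq_mul]
  have hQ := discrim_step h hsp hdeg
  rw [hco 0 (by omega), hco 1 (by omega), hco 2 (by omega)] at hQ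
  simp only [zero_add, Nat.descFactorial_self] at hQ
  have e1 : ((1 + d).descFactorial d : ℝ) = (d.factorial : ℝ) * ((d : ℝ) + 1) := by
    rw [Nat.descFactorial_eq_factorial_mul_choose, show 1 + d = d + 1 by omega,
      Nat.choose_succ_self_right]
    push_cast; ring
  have e2 : ((2 + d).descFactorial d : ℝ) = (d.factorial : ℝ) * ((d : ℝ) + 2) * ((d : ℝ) + 1) / 2 := by
    rw [Nat.descFactorial_eq_factorial_mul_choose, show 2 + d = d + 2 by omega]
    have hsym : (d + 2).choose d = (d + 2).choose 2 := by
      rw [show d = d + 2 - 2 by omega]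
      exact Nat.choose_symm (by omega)
    have h2' : ((d + 2).choose 2 : ℝ) * 2 = ((d : ℝ) + 2) * ((d : ℝ) + 1) := by
      have := Nat.add_one_mul_choose_eq (d + 1) 1
      rw [Nat.choose_one_right] at this
      have := congrArg (Nat.cast : ℕ → ℝ) this
      push_cast [Nat.succ_eq_add_one] at this
      linarith
    rw [hsym]
    push_cast
    linear_combination ((d.factorial : ℝ) / 2) * h2'
  rw [e1, e2, show 2 + d = d + 2 by omega, show 1 + d = d + 1 by omega] at hQ
  have hF : (0 : ℝ) < (d.factorial : ℝ) := by exact_mod_cast d.factorial_pos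
  refine le_of_mul_le_mul_left ?_
    (show (0:ℝ) < (d.factorial : ℝ)^2 * ((d:ℝ)+1) by positivity)
  calc ((d.factorial : ℝ)^2 * ((d:ℝ)+1)) * (2 * ((d : ℝ) + 2) * (s.esymm (d + 2) * s.esymm d))
      = 4 * ((d.factorial : ℝ) * ((d:ℝ)+2) * ((d:ℝ)+1) / 2 * s.esymm (d+2) *
          ((d.factorial : ℝ) * s.esymm d)) := by ring
    _ ≤ ((d.factorial : ℝ) * ((d:ℝ)+1) * s.esymm (d+1)) ^ 2 := hQ
    _ = ((d.factorial : ℝ)^2 * ((d:ℝ)+1)) * (((d : ℝ) + 1) * (s.esymm (d+1))^2) := by ring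

lemma choose_idR (n j : ℕ) (hj : j + 1 ≤ n) :
    ((n : ℝ) - j) * (n.choose j : ℝ) = (n : ℝ) * (((n - 1).choose j : ℝ)) := by
  have h1 := Nat.choose_succ_right_eq n j
  have h2 := Nat.add_one_mul_choose_eq (n - 1) j
  rw [show n - 1 + 1 = n by omega] at h2
  have c1 := congrArg (Nat.cast (R := ℝ)) h1
  have c2 := congrArg (Nat.cast (R := ℝ)) h2
  push_cast [Nat.cast_sub (show j ≤ n by omega)] at c1 c2
  linear_combination (-1 : ℝ) * c1 - c2

lemma choose2R (m : ℕ) : ((m + 2).choose m : ℝ) * 2 = ((m : ℝ) + 2) * ((m : ℝ) + 1) := by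
  have hsym : (m + 2).choose m = (m + 2).choose 2 := by
    rw [show m = m + 2 - 2 by omega]
    exact Nat.choose_symm (by omega)
  have h2' : ((m + 2).choose 2 : ℝ) * 2 = ((m : ℝ) + 2) * ((m : ℝ) + 1) := by
    have := Nat.add_one_mul_choose_eq (m + 1) 1
    rw [Nat.choose_one_right] at this
    have := congrArg (Nat.cast (R := ℝ)) this
    push_cast [Nat.succ_eq_add_one] at this
    linarith
  rw [hsym]; exact h2'

lemma newton_ineq : ∀ (d : ℕ) (s : Multiset ℝ) (m : ℕ), Multiset.card s = m + 2 + d →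
    s.esymm m / ((m + 2 + d).choose m : ℝ) *
        (s.esymm (m + 2) / ((m + 2 + d).choose (m + 2) : ℝ)) ≤
      (s.esymm (m + 1) / ((m + 2 + d).choose (m + 1) : ℝ)) ^ 2 := by
  intro d
  induction d with
  | zero =>
      intro s m hc
      have hbase := newton_base s m (by simpa using hc)
      have hc1 : (m + 2 + 0).choose (m + 2) = 1 := by simp
      have hc2 : (m + 2 + 0).choose (m + 1) = m + 2 := by
        simpa using Nat.choose_succ_self_right (m + 1)
      have hCpos : (0 : ℝ) < ((m + 2 + 0).choose m : ℝ) := by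
        exact_mod_cast Nat.choose_pos (by omega)
      rw [hc1, hc2]
      rw [div_mul_div_comm, div_pow, div_le_div_iff₀ (by positivity) (by positivity)]
      have hC := choose2R m
      have h0 : ((m + 2 + 0).choose m : ℝ) = ((m + 2).choose m : ℝ) := by norm_num
      rw [h0]
      push_cast
      nlinarith [hbase, hC, sq_nonneg (s.esymm (m + 1))]
  | succ d ih =>
      intro s m hc
      obtain ⟨t, hct, hrel⟩ := exists_deriv_multiset s (by omega)
      rw [hc] at hrel hct
      set n := m + 2 + (d + 1) with hn
      have hkey : ∀ j, j ≤ n - 1 →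
          s.esymm j / ((n.choose j : ℝ)) = t.esymm j / (((n - 1).choose j : ℝ)) := by
        intro j hj
        have hid := choose_idR n j (by omega)
        have hr := hrel j hj
        rw [div_eq_div_iff
          ((Nat.cast_ne_zero (R := ℝ)).mpr (Nat.choose_pos (by omega : j ≤ n)).ne')
          ((Nat.cast_ne_zero (R := ℝ)).mpr (Nat.choose_pos (by omega : j ≤ n - 1)).ne')]
        apply mul_left_cancel₀ (show (n : ℝ) ≠ 0 by positivity)
        linear_combination ((n.choose j : ℝ)) * hr - s.esymm j * hid
      have h1 : n - 1 = m + 2 + d := by omega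
      rw [hkey m (by omega), hkey (m + 1) (by omega), hkey (m + 2) (by omega), h1]
      exact ih t m (by omega)

/-- `S_k(λ)`: the `k`-th elementary symmetric polynomial of `λ ∈ ℝ^n` (with `S_0 = 1`). -/
def Sv {n : ℕ} (k : ℕ) (lam : Fin n → ℝ) : ℝ :=
  ∑ s ∈ Finset.univ.powersetCard k, ∏ i ∈ s, lam i

lemma Sv_esymm {n : ℕ} (lam : Fin n → ℝ) (j : ℕ) :
    Sv j lam = (Finset.univ.val.map lam).esymm j :=
  (Finset.esymm_map_val lam Finset.univ j).symm

lemma Sv_zero {n : ℕ} (lam : Fin n → ℝ) : Sv 0 lam = 1 := by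
  simp [Sv, Finset.powersetCard_zero]

lemma Sv_of_gt {n : ℕ} (lam : Fin n → ℝ) {j : ℕ} (h : n < j) : Sv j lam = 0 := by
  rw [Sv, Finset.powersetCard_eq_empty.mpr (by simpa using h), Finset.sum_empty]

lemma newton_Sv {n : ℕ} (lam : Fin n → ℝ) (m : ℕ) (h : m + 2 ≤ n) :
    Sv m lam / (n.choose m : ℝ) * (Sv (m + 2) lam / (n.choose (m + 2) : ℝ)) ≤
      (Sv (m + 1) lam / (n.choose (m + 1) : ℝ)) ^ 2 := by
  have hcard : Multiset.card (Finset.univ.val.map lam) = m + 2 + (n - m - 2) := by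
    simp; omega
  have := newton_ineq (n - m - 2) (Finset.univ.val.map lam) m hcard
  rw [show m + 2 + (n - m - 2) = n by omega] at this
  rw [Sv_esymm lam m, Sv_esymm lam (m+1), Sv_esymm lam (m+2)]
  exact this

lemma key_ratio {a b ca cb : ℝ} (hb : 0 < b) (hca : 0 < ca) (hcb : 0 < cb)
    (h : a / ca ≤ b / cb) : a / b ≤ ca / cb := by
  rw [div_le_div_iff₀ hca hcb] at h
  rw [div_le_div_iff₀ hb hcb]
  linarith

/-- Under `S_k/S_l = C(n,k)/C(n,l)` on the Garding cone:
`S_{k+1}/S_k ≤ (n−k)/(k+1)`, and for `l ≥ 1`, `S_{l−1}/S_l ≤ l/(n−l+1)`. -/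
theorem stmt_6 {n : ℕ} (k l : ℕ) (lam : Fin n → ℝ)
    (hGamma : ∀ i, 1 ≤ i → i ≤ k → 0 < Sv i lam)
    (hlk : l < k) (hkn : k ≤ n)
    (hquot : Sv k lam / Sv l lam = (n.choose k : ℝ) / (n.choose l : ℝ)) :
    Sv (k + 1) lam / Sv k lam ≤ ((n : ℝ) - (k : ℝ)) / ((k : ℝ) + 1)
    ∧ (1 ≤ l →
        Sv (l - 1) lam / Sv l lam ≤ (l : ℝ) / ((n : ℝ) - (l : ℝ) + 1)) := by
  obtain ⟨k', rfl⟩ : ∃ k', k = k' + 1 := ⟨k - 1, by omega⟩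
  set p : ℕ → ℝ := fun j => Sv j lam / ((n.choose j : ℝ)) with hp
  have hchoosepos : ∀ j, j ≤ n → (0 : ℝ) < (n.choose j : ℝ) := fun j hj => by
    exact_mod_cast Nat.choose_pos hj
  have hppos : ∀ i, i ≤ k' + 1 → 0 < p i := by
    intro i hik
    rcases Nat.eq_zero_or_pos i with h0 | h1
    · subst h0; simp only [hp]; rw [Sv_zero]; simp
    · exact div_pos (hGamma i h1 hik) (hchoosepos i (le_trans hik hkn))
  have hNewton : ∀ m, m + 2 ≤ n → p m * p (m + 2) ≤ p (m + 1) ^ 2 := fun m hm =>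
    newton_Sv lam m hm
  have hpkl : p (k' + 1) = p l := by
    have hSl : 0 < Sv l lam := by
      rcases Nat.eq_zero_or_pos l with h0 | h1
      · subst h0; rw [Sv_zero]; norm_num
      · exact hGamma l h1 (by omega)
    have hCl := hchoosepos l (by omega)
    have hCk := hchoosepos (k' + 1) hkn
    rw [div_eq_div_iff hSl.ne' hCl.ne'] at hquot
    simp only [hp]
    rw [div_eq_div_iff hCk.ne' hCl.ne']
    linear_combination hquot
  have hrchain : ∀ m, l ≤ m → ∀ m', m ≤ m' → m' + 1 ≤ k' + 1 →
      p (m' + 1) / p m' ≤ p (m + 1) / p m := by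
    intro m hm m' hm'
    induction m', hm' using Nat.le_induction with
    | base => intro _; exact le_rfl
    | succ m' hm' ih =>
        intro hk
        have step : p (m' + 1 + 1) / p (m' + 1) ≤ p (m' + 1) / p m' := by
          rw [div_le_div_iff₀ (hppos (m' + 1) (by omega)) (hppos m' (by omega)),
            show m' + 1 + 1 = m' + 2 by omega]
          have hN := hNewton m' (by omega)
          rw [sq] at hN; linarith
        exact step.trans (ih (by omega))
  have hrl : p l ≤ p (l + 1) := by
    by_contra hlt
    push_neg at hlt
    have hdec : ∀ m, l + 1 ≤ m → m ≤ k' + 1 → p m ≤ p (l + 1) := by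
      intro m hm
      induction m, hm using Nat.le_induction with
      | base => intro _; exact le_rfl
      | succ m hm ih =>
          intro hmk
          have h1 : p (m + 1) / p m ≤ p (l + 1) / p l := hrchain l le_rfl m (by omega) (by omega)
          have h2 : p (l + 1) / p l < 1 := (div_lt_one (hppos l (by omega))).mpr hlt
          have h3 : p (m + 1) < p m := (div_lt_one (hppos m (by omega))).mp (lt_of_le_of_lt h1 h2)
          exact le_trans h3.le (ih (by omega))
    have h4 : p (k' + 1) ≤ p (l + 1) := hdec (k' + 1) (by omega) le_rfl
    rw [hpkl] at h4
    linarith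
  have hrk : p (k' + 1) ≤ p k' := by
    by_contra hgt
    push_neg at hgt
    have hinc : ∀ m, l ≤ m → m ≤ k' → p l ≤ p m := by
      intro m hm
      induction m, hm using Nat.le_induction with
      | base => intro _; exact le_rfl
      | succ m hm ih =>
          intro hmk
          have h1 : p (k' + 1) / p k' ≤ p (m + 1) / p m := hrchain m hm k' (by omega) (by omega)
          have h2 : 1 < p (k' + 1) / p k' := (one_lt_div (hppos k' (by omega))).mpr hgt
          have h3 : p m < p (m + 1) := (one_lt_div (hppos m (by omega))).mp (lt_of_lt_of_le h2 h1)
          exact le_trans (ih (by omega)) h3.le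
    have h4 : p l ≤ p k' := hinc k' (by omega) le_rfl
    linarith [hpkl]
  constructor
  · rcases eq_or_lt_of_le hkn with heq | hlt2
    · rw [Sv_of_gt lam (show n < k' + 1 + 1 by omega), zero_div]
      have hz : ((n : ℝ) - ((k' + 1 : ℕ) : ℝ)) = 0 := by rw [← heq]; ring
      rw [hz, zero_div]
    · have hN := hNewton k' (by omega)
      have hk1pos := hppos (k' + 1) le_rfl
      have hk0pos := hppos k' (by omega)
      have hstep : p (k' + 1 + 1) ≤ p (k' + 1) := by
        rw [show k' + 1 + 1 = k' + 2 by omega]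
        nlinarith [hN, mul_le_mul_of_nonneg_left hrk hk1pos.le, hk0pos, hk1pos]
      have hdiv : Sv (k' + 1 + 1) lam / ((n.choose (k' + 1 + 1) : ℝ)) ≤
          Sv (k' + 1) lam / (n.choose (k' + 1) : ℝ) := hstep
      have hSk : 0 < Sv (k' + 1) lam := hGamma _ (by omega) le_rfl
      have h1 := key_ratio hSk (hchoosepos (k' + 1 + 1) (by omega))
        (hchoosepos (k' + 1) (by omega)) hdiv
      refine h1.trans (le_of_eq ?_)
      rw [div_eq_div_iff (hchoosepos (k' + 1) (by omega)).ne'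
        (show ((0 : ℝ) < ((k' + 1 : ℕ) : ℝ) + 1) by positivity).ne']
      have hc := congrArg (Nat.cast (R := ℝ)) (Nat.choose_succ_right_eq n (k' + 1))
      push_cast [Nat.cast_sub (show k' + 1 ≤ n by omega)] at hc ⊢
      linear_combination hc
  · intro hl
    obtain ⟨l', rfl⟩ : ∃ l', l = l' + 1 := ⟨l - 1, by omega⟩
    rw [show l' + 1 - 1 = l' by omega]
    have hSl : 0 < Sv (l' + 1) lam := hGamma _ (by omega) (by omega)
    have hrhs : (0 : ℝ) ≤ ((l' + 1 : ℕ) : ℝ) / ((n : ℝ) - ((l' + 1 : ℕ) : ℝ) + 1) := by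
      apply div_nonneg (by positivity)
      have h9 : ((l' + 1 : ℕ) : ℝ) ≤ (n : ℝ) := by exact_mod_cast (by omega : l' + 1 ≤ n)
      linarith
    rcases le_or_gt (Sv l' lam) 0 with hle | hpos
    · exact le_trans (div_nonpos_of_nonpos_of_nonneg hle hSl.le) hrhs
    · have hpl' : 0 < p l' := div_pos hpos (hchoosepos l' (by omega))
      have hN := hNewton l' (by omega)
      have h2 : p (l' + 1) ≤ p (l' + 2) := by
        rw [show l' + 2 = l' + 1 + 1 by omega]; exact hrl
      have hstep : p l' ≤ p (l' + 1) := by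
        nlinarith [hN, h2, hpl', hppos (l' + 1) (by omega)]
      have hdiv : Sv l' lam / (n.choose l' : ℝ) ≤
          Sv (l' + 1) lam / (n.choose (l' + 1) : ℝ) := hstep
      have h1 := key_ratio hSl (hchoosepos l' (by omega))
        (hchoosepos (l' + 1) (by omega)) hdiv
      refine h1.trans (le_of_eq ?_)
      rw [div_eq_div_iff (hchoosepos (l' + 1) (by omega)).ne'
        (show ((0 : ℝ) < (n : ℝ) - ((l' + 1 : ℕ) : ℝ) + 1) by
          have h9 : ((l' + 1 : ℕ) : ℝ) ≤ (n : ℝ) := by exact_mod_cast (by omega : l' + 1 ≤ n)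
          push_cast at h9 ⊢; linarith).ne']
      have hc := congrArg (Nat.cast (R := ℝ)) (Nat.choose_succ_right_eq n l')
      push_cast [Nat.cast_sub (show l' ≤ n by omega)] at hc ⊢
      linear_combination -hc
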